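/- Let D be a positive integer with D ≡ 1 (mod 4), set ϖ := (1−D)/4 ∈ ℤ and Q(u,v) := u² + u·v + ϖ·v². Let x, y be integers with x ≥ 2, y ≥ 1 and Q(x, y) = 1, and set g₁ := gcd(x+1, y), g₂ := gcd(x−1, y), P₁ := (2x+y+2)/g₁², P₂ := (2x+y−2)/g₂². Let M, N be integers, not both zero, g := gcd(M, N), M₁ := M/g, N₁ := N/g and n := Q(M₁, N₁). Then g₁ divides both M₁·y − N₁·(1+x) and N₁·ϖ·y + (M₁+N₁)·(1+x), g₂ divides both N₁·(1−x) + M₁·y and N₁·ϖ·y + (M₁+N₁)·(x−1), and, setting a₃ := (M₁·y − N₁·(1+x))/g₁, b₃ := (N₁·ϖ·y + (M₁+N₁)·(1+x))/g₁, a₄ := (N₁·(1−x) + M₁·y)/g₂, b₄ := (N₁·ϖ·y + (M₁+N₁)·(x−1))/g₂, one has Q(b₃, a₃) = P₁·n and Q(b₄, a₄) = −P₂·n. -/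

import Mathlib

/-- Cases `j = 3, 4` of Lemma `lem:diagterms`: the displayed integer linear
forms are divisible by `g₁` resp. `g₂`, and with `a₃, b₃, a₄, b₄` the
corresponding quotients one has `Q(b₃, a₃) = P₁·n` and `Q(b₄, a₄) = −P₂·n`. -/
theorem diagterms_Q_values_three_four
    (D : ℤ) (hD : 0 < D) (hD4 : D % 4 = 1)
    (varpi : ℤ) (hv : 4 * varpi = 1 - D)
    (Q : ℤ → ℤ → ℤ) (hQ : ∀ u v, Q u v = u ^ 2 + u * v + varpi * v ^ 2)
    (x y : ℤ) (hx : 2 ≤ x) (hy : 1 ≤ y) (hunit : Q x y = 1)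
    (g₁ g₂ P₁ P₂ : ℤ)
    (hg₁ : g₁ = Int.gcd (x + 1) y) (hg₂ : g₂ = Int.gcd (x - 1) y)
    (hP₁ : P₁ = (2 * x + y + 2) / g₁ ^ 2) (hP₂ : P₂ = (2 * x + y - 2) / g₂ ^ 2)
    (M N : ℤ) (hMN : ¬(M = 0 ∧ N = 0))
    (g M₁ N₁ n : ℤ) (hg : g = Int.gcd M N)
    (hM₁ : M₁ = M / g) (hN₁ : N₁ = N / g) (hn : n = Q M₁ N₁) :
    (g₁ ∣ M₁ * y - N₁ * (1 + x)) ∧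
    (g₁ ∣ N₁ * varpi * y + (M₁ + N₁) * (1 + x)) ∧
    (g₂ ∣ N₁ * (1 - x) + M₁ * y) ∧
    (g₂ ∣ N₁ * varpi * y + (M₁ + N₁) * (x - 1)) ∧
    Q ((N₁ * varpi * y + (M₁ + N₁) * (1 + x)) / g₁)
      ((M₁ * y - N₁ * (1 + x)) / g₁) = P₁ * n ∧
    Q ((N₁ * varpi * y + (M₁ + N₁) * (x - 1)) / g₂)
      ((N₁ * (1 - x) + M₁ * y) / g₂) = -P₂ * n := by
  have hy0 : y ≠ 0 := by omega
  have hg1pos : 0 < g₁ := by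
    rw [hg₁]; exact_mod_cast Nat.pos_of_ne_zero (fun h => hy0 (by
      have := Nat.eq_zero_of_gcd_eq_zero_right h
      exact Int.natAbs_eq_zero.mp this))
  have hg2pos : 0 < g₂ := by
    rw [hg₂]; exact_mod_cast Nat.pos_of_ne_zero (fun h => hy0 (by
      have := Nat.eq_zero_of_gcd_eq_zero_right h
      exact Int.natAbs_eq_zero.mp this))
  have hg1ne : g₁ ≠ 0 := ne_of_gt hg1pos
  have hg2ne : g₂ ≠ 0 := ne_of_gt hg2pos
  have hd1 : g₁ ∣ x + 1 := hg₁ ▸ Int.gcd_dvd_left _ _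
  have hd2 : g₁ ∣ y := hg₁ ▸ Int.gcd_dvd_right _ _
  have hd3 : g₂ ∣ x - 1 := hg₂ ▸ Int.gcd_dvd_left _ _
  have hd4 : g₂ ∣ y := hg₂ ▸ Int.gcd_dvd_right _ _
  obtain ⟨p, hp⟩ := hd1
  obtain ⟨q, hq⟩ := hd2
  obtain ⟨r, hr⟩ := hd3
  obtain ⟨s, hs⟩ := hd4
  have hu : x ^ 2 + x * y + varpi * y ^ 2 = 1 := by rw [← hQ]; exact hunit
  -- the four linear forms
  have e1 : M₁ * y - N₁ * (1 + x) = g₁ * (M₁ * q - N₁ * p) := by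
    have : (1 : ℤ) + x = g₁ * p := by linarith [hp]
    rw [this, hq]; ring
  have e2 : N₁ * varpi * y + (M₁ + N₁) * (1 + x) = g₁ * (N₁ * varpi * q + (M₁ + N₁) * p) := by
    have : (1 : ℤ) + x = g₁ * p := by linarith [hp]
    rw [this, hq]; ring
  have e3 : N₁ * (1 - x) + M₁ * y = g₂ * (M₁ * s - N₁ * r) := by
    have : (1 : ℤ) - x = g₂ * (-r) := by linarith [hr]
    rw [this, hs]; ring
  have e4 : N₁ * varpi * y + (M₁ + N₁) * (x - 1) = g₂ * (N₁ * varpi * s + (M₁ + N₁) * r) := by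
    rw [hr, hs]; ring
  refine ⟨⟨_, e1⟩, ⟨_, e2⟩, ⟨_, e3⟩, ⟨_, e4⟩, ?_, ?_⟩
  · -- case j = 3
    have key1 : g₁ ^ 2 * (p ^ 2 + p * q + varpi * q ^ 2)
        = (x + 1) ^ 2 + (x + 1) * y + varpi * y ^ 2 := by rw [hp, hq]; ring
    have hP : 2 * x + y + 2 = g₁ ^ 2 * (p ^ 2 + p * q + varpi * q ^ 2) := by
      rw [key1]; linear_combination -hu
    have hP₁' : P₁ = p ^ 2 + p * q + varpi * q ^ 2 := by
      rw [hP₁, hP, Int.mul_ediv_cancel_left _ (pow_ne_zero 2 hg1ne)]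
    rw [e1, e2, Int.mul_ediv_cancel_left _ hg1ne, Int.mul_ediv_cancel_left _ hg1ne,
      hQ, hP₁', hn, hQ]
    ring
  · -- case j = 4
    have key2 : g₂ ^ 2 * (-(r ^ 2 + r * s + varpi * s ^ 2))
        = -((x - 1) ^ 2 + (x - 1) * y + varpi * y ^ 2) := by rw [hr, hs]; ring
    have hP : 2 * x + y - 2 = g₂ ^ 2 * (-(r ^ 2 + r * s + varpi * s ^ 2)) := by
      rw [key2]; linear_combination hu
    have hP₂' : P₂ = -(r ^ 2 + r * s + varpi * s ^ 2) := by
      rw [hP₂, hP, Int.mul_ediv_cancel_left _ (pow_ne_zero 2 hg2ne)]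
    rw [e3, e4, Int.mul_ediv_cancel_left _ hg2ne, Int.mul_ediv_cancel_left _ hg2ne,
      hQ, hP₂', hn, hQ]
    ring
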